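/- Let β ∈ (0,1) and let a, γ be reals with a ≥ 1 and γ ≥ 1. Let (I(t))_{t∈ℕ} be a sequence of nonnegative reals with I(0) = 0 such that I(t+1) ≤ I(t) + a·(I(t) + γ)^β for every t ∈ ℕ. Then I(t) ≤ (a·(t + γ))^{1/(1−β)} − γ for every t ∈ ℕ. -/

import Mathlib

/-- The induction bound (eq. `Itupperbound`) in the proof of Theorem 4 of the
paper: if `I(0) = 0` and `I(t+1) ≤ I(t) + a·(I(t) + γ)^β`, then
`I(t) ≤ (a·(t + γ))^(1/(1−β)) − γ`. -/
theorem stmt_17 (β a γ : ℝ) (hβ : β ∈ Set.Ioo (0:ℝ) 1) (ha : 1 ≤ a) (hγ : 1 ≤ γ)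
    (I : ℕ → ℝ) (hInonneg : ∀ t, 0 ≤ I t) (hI0 : I 0 = 0)
    (hrec : ∀ t, I (t + 1) ≤ I t + a * (I t + γ) ^ β) :
    ∀ t, I t ≤ (a * ((t : ℝ) + γ)) ^ ((1 : ℝ) / (1 - β)) - γ := by
  obtain ⟨hβ0, hβ1⟩ := hβ
  have h1β : (0:ℝ) < 1 - β := by linarith
  set c : ℝ := 1 / (1 - β) with hc
  have hc1 : 1 ≤ c := by
    rw [hc]; rw [le_div_iff₀ h1β]; linarith
  intro t
  induction t with
  | zero =>
    rw [hI0]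
    have hu1 : (1:ℝ) ≤ a * ((0:ℕ) + γ) := by push_cast; nlinarith
    have h := Real.rpow_le_rpow_of_exponent_le hu1 hc1
    rw [Real.rpow_one] at h
    push_cast at h ⊢
    nlinarith
  | succ t ih =>
    set u : ℝ := a * ((t:ℝ) + γ) with hudef
    have ht0 : (0:ℝ) ≤ (t:ℝ) := Nat.cast_nonneg t
    have hu1 : (1:ℝ) ≤ u := by rw [hudef]; nlinarith
    have hu0 : (0:ℝ) < u := by linarith
    have hcb : c * β = c - 1 := by
      rw [hc]; field_simp; ring
    have hfb : (u ^ c) ^ β = u ^ (c - 1) := by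
      rw [← Real.rpow_mul hu0.le, hcb]
    have hIt : I t + γ ≤ u ^ c := by linarith
    have hIb : (I t + γ) ^ β ≤ u ^ (c - 1) := by
      rw [← hfb]
      exact Real.rpow_le_rpow (by linarith [hInonneg t]) hIt hβ0.le
    have hsplit : u ^ c = u * u ^ (c - 1) := by
      nth_rewrite 1 [show c = 1 + (c - 1) by ring]
      rw [Real.rpow_add hu0, Real.rpow_one]
    have hsplit2 : (u + a) ^ c = (u + a) * (u + a) ^ (c - 1) := by
      nth_rewrite 1 [show c = 1 + (c - 1) by ring]
      rw [Real.rpow_add (by linarith), Real.rpow_one]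
    have hmono : u ^ (c - 1) ≤ (u + a) ^ (c - 1) :=
      Real.rpow_le_rpow hu0.le (by linarith) (by linarith)
    have hpos : (0:ℝ) ≤ u ^ (c - 1) := Real.rpow_nonneg hu0.le _
    have key : u ^ c + a * u ^ (c - 1) ≤ (u + a) ^ c := by
      rw [hsplit, hsplit2]
      nlinarith
    have hrec' := hrec t
    have hfinal : I (t + 1) ≤ (u + a) ^ c - γ := by
      calc I (t + 1) ≤ I t + a * (I t + γ) ^ β := hrec'
        _ ≤ (u ^ c - γ) + a * u ^ (c - 1) := by nlinarith
        _ ≤ (u + a) ^ c - γ := by linarith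
    have heq : a * ((t:ℝ) + 1 + γ) = u + a := by
      rw [hudef]; ring
    calc I (t + 1) ≤ (u + a) ^ c - γ := hfinal
      _ = (a * (((t + 1 : ℕ) : ℝ) + γ)) ^ c - γ := by push_cast; rw [heq]
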